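/- Farkas' lemma, affine form: if g₁,…,g_m are affine-linear polynomials on ℝⁿ with K = {x : gᵢ(x) ≥ 0 ∀i} non-empty, and f is an affine-linear polynomial with f ≥ 0 on K, then f = λ₀ + λ₁g₁ + ⋯ + λ_m g_m for some λ₀,…,λ_m ≥ 0. -/

import Mathlib

open MvPolynomial Matrix Finset

abbrev PolyMat (n t : ℕ) := Matrix (Fin t) (Fin t) (MvPolynomial (Fin n) ℝ)

noncomputable def evalMat {n t : ℕ} (x : Fin n → ℝ) (A : PolyMat n t) :
    Matrix (Fin t) (Fin t) ℝ :=
  A.map (MvPolynomial.eval x)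

def IsMatQuadraticModule {n t : ℕ} (Q : Set (PolyMat n t)) : Prop :=
  (1 : PolyMat n t) ∈ Q ∧ (∀ F G, F ∈ Q → G ∈ Q → F + G ∈ Q) ∧
    (∀ (A F : PolyMat n t), F ∈ Q → Aᵀ * F * A ∈ Q)

def MatArchimedean {n t : ℕ} (Q : Set (PolyMat n t)) : Prop :=
  ∀ F : PolyMat n t, F.IsSymm → ∃ l : ℝ, 0 < l ∧
    (l • (1 : PolyMat n t) + F ∈ Q ∧ l • (1 : PolyMat n t) - F ∈ Q)

def KMat {n t : ℕ} (Q : Set (PolyMat n t)) : Set (Fin n → ℝ) :=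
  {x | ∀ G ∈ Q, (evalMat x G).PosSemidef}

def KSet {n : ℕ} (G : Set (MvPolynomial (Fin n) ℝ)) : Set (Fin n → ℝ) :=
  {x | ∀ g ∈ G, 0 ≤ MvPolynomial.eval x g}

def IsQuadraticModule {n : ℕ} (M : Set (MvPolynomial (Fin n) ℝ)) : Prop :=
  (1 : MvPolynomial (Fin n) ℝ) ∈ M ∧ (∀ f g, f ∈ M → g ∈ M → f + g ∈ M) ∧
    ∀ (a f : MvPolynomial (Fin n) ℝ), f ∈ M → a ^ 2 * f ∈ M

def IsSemiringCone {n : ℕ} (M : Set (MvPolynomial (Fin n) ℝ)) : Prop :=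
  (∀ f g, f ∈ M → g ∈ M → f + g ∈ M) ∧ (∀ f g, f ∈ M → g ∈ M → f * g ∈ M) ∧
    ∀ r : ℝ, 0 ≤ r → MvPolynomial.C r ∈ M

def IsScalarArchimedean {n : ℕ} (M : Set (MvPolynomial (Fin n) ℝ)) : Prop :=
  ∀ f : MvPolynomial (Fin n) ℝ, ∃ l : ℝ, 0 < l ∧
    (MvPolynomial.C l + f ∈ M ∧ MvPolynomial.C l - f ∈ M)

def QM {n : ℕ} (G : Set (MvPolynomial (Fin n) ℝ)) : Set (MvPolynomial (Fin n) ℝ) :=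
  ⋂₀ {M | IsQuadraticModule M ∧ G ⊆ M}

def SR {n : ℕ} (G : Set (MvPolynomial (Fin n) ℝ)) : Set (MvPolynomial (Fin n) ℝ) :=
  ⋂₀ {M | IsSemiringCone M ∧ G ⊆ M}

def MatQM {n t : ℕ} (𝒢 : Set (PolyMat n t)) : Set (PolyMat n t) :=
  ⋂₀ {Q | IsMatQuadraticModule Q ∧ 𝒢 ⊆ Q}

def liftT {n : ℕ} (M : Set (MvPolynomial (Fin n) ℝ)) (t : ℕ) : Set (PolyMat n t) :=
  {F | ∃ (k : ℕ) (m : Fin k → MvPolynomial (Fin n) ℝ) (A : Fin k → PolyMat n t),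
    (∀ i, m i ∈ M) ∧ F = ∑ i, m i • ((A i)ᵀ * A i)}

def P0 {n : ℕ} : Set (MvPolynomial (Fin n) ℝ) := {p | ∀ s, 0 ≤ p.coeff s}


lemma farkas_lin : ∀ (k : ℕ) {d : ℕ} (y : Fin k → Fin d → ℝ) (c : Fin d → ℝ),
    (∀ x : Fin d → ℝ, (∀ i, 0 ≤ y i ⬝ᵥ x) → 0 ≤ c ⬝ᵥ x) →
    ∃ lam : Fin k → ℝ, (∀ i, 0 ≤ lam i) ∧ c = ∑ i, lam i • y i := by
  intro k
  induction k with
  | zero =>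
    intro d y c h
    have h0 := h (-c) (fun i => i.elim0)
    have hcc : c ⬝ᵥ c ≤ 0 := by
      rw [dotProduct_neg] at h0; linarith
    have hc0 : c = 0 := by
      funext j
      have hz : ∑ i, c i * c i = 0 :=
        le_antisymm hcc (Finset.sum_nonneg fun i _ => mul_self_nonneg _)
      have := (Finset.sum_eq_zero_iff_of_nonneg
        (fun i _ => mul_self_nonneg (c i))).mp hz j (Finset.mem_univ j)
      exact mul_self_eq_zero.mp this
    exact ⟨0, fun i => le_refl _, by simp [hc0]⟩
  | succ k ih =>
    intro d y c h
    by_cases hA : ∀ x, (∀ i : Fin k, 0 ≤ y i.castSucc ⬝ᵥ x) → 0 ≤ c ⬝ᵥ x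
    · obtain ⟨lam, hlam, hc⟩ := ih (fun i => y i.castSucc) c hA
      refine ⟨Fin.snoc lam 0, fun i => ?_, ?_⟩
      · refine Fin.lastCases ?_ (fun j => ?_) i <;> simp [hlam]
      · rw [Fin.sum_univ_castSucc]; simp [hc]
    · push_neg at hA
      obtain ⟨x₀, hx₀, hcx₀⟩ := hA
      set ak := y (Fin.last k) with hak_def
      have hak : ak ⬝ᵥ x₀ < 0 := by
        by_contra hk
        push_neg at hk
        have := h x₀ (fun i => Fin.lastCases hk hx₀ i)
        linarith
      set μ := ak ⬝ᵥ x₀ with hμ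
      have hμne : μ ≠ 0 := ne_of_lt hak
      set b : Fin k → Fin d → ℝ :=
        fun i => y i.castSucc - (y i.castSucc ⬝ᵥ x₀ / μ) • ak with hb
      set c' : Fin d → ℝ := c - (c ⬝ᵥ x₀ / μ) • ak with hc'
      have hdot : ∀ (v w : Fin d → ℝ) (r : ℝ), (v - r • w) ⬝ᵥ x₀ = v ⬝ᵥ x₀ - r * (w ⬝ᵥ x₀) := by
        intro v w r; rw [sub_dotProduct, smul_dotProduct, smul_eq_mul]
      have key : ∀ x, (∀ i, 0 ≤ b i ⬝ᵥ x) → 0 ≤ c' ⬝ᵥ x := by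
        intro x hx
        set x' : Fin d → ℝ := x - (ak ⬝ᵥ x / μ) • x₀ with hx'
        have hdx : ∀ v : Fin d → ℝ, v ⬝ᵥ x' = v ⬝ᵥ x - (ak ⬝ᵥ x / μ) * (v ⬝ᵥ x₀) := by
          intro v; rw [hx', dotProduct_sub, dotProduct_smul, smul_eq_mul]
        have h1 : ∀ i : Fin k, 0 ≤ y i.castSucc ⬝ᵥ x' := by
          intro i
          have hbi : b i ⬝ᵥ x = y i.castSucc ⬝ᵥ x - (y i.castSucc ⬝ᵥ x₀ / μ) * (ak ⬝ᵥ x) := by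
            rw [hb, sub_dotProduct, smul_dotProduct, smul_eq_mul]
        
          have : y i.castSucc ⬝ᵥ x' = b i ⬝ᵥ x := by
            rw [hdx, hbi]; ring
          rw [this]; exact hx i
        have h2 : ak ⬝ᵥ x' = 0 := by
          rw [hdx]; field_simp; rw [← hμ]; ring
        have hcx' : 0 ≤ c ⬝ᵥ x' := h x' (fun i => Fin.lastCases (le_of_eq h2.symm) h1 i)
        have : c' ⬝ᵥ x = c ⬝ᵥ x' := by
          rw [hdx, hc', sub_dotProduct, smul_dotProduct, smul_eq_mul]; ring
        linarith
      obtain ⟨lam, hlam, hcs⟩ := ih b c' key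
      refine ⟨Fin.snoc lam (c ⬝ᵥ x₀ / μ - ∑ i, lam i * (y i.castSucc ⬝ᵥ x₀ / μ)), fun i => ?_, ?_⟩
      · refine Fin.lastCases ?_ (fun j => ?_) i
        · simp only [Fin.snoc_last]
          have h1 : 0 < c ⬝ᵥ x₀ / μ := div_pos_of_neg_of_neg hcx₀ hak
          have h2 : ∑ i, lam i * (y i.castSucc ⬝ᵥ x₀ / μ) ≤ 0 := by
            apply Finset.sum_nonpos
            intro i _
            exact mul_nonpos_of_nonneg_of_nonpos (hlam i)
              (div_nonpos_of_nonneg_of_nonpos (hx₀ i) (le_of_lt hak))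
          linarith
        · simp [hlam]
      · rw [Fin.sum_univ_castSucc]
        simp only [Fin.snoc_castSucc, Fin.snoc_last]
        have expand : ∑ i : Fin k, lam i • b i
            = ∑ i : Fin k, lam i • y i.castSucc
              - (∑ i : Fin k, lam i * (y i.castSucc ⬝ᵥ x₀ / μ)) • ak := by
          rw [Finset.sum_smul]
          rw [← Finset.sum_sub_distrib]
          congr 1
          funext i
          rw [hb, smul_sub, smul_smul]
        have : c' = ∑ i : Fin k, lam i • y i.castSucc
              - (∑ i : Fin k, lam i * (y i.castSucc ⬝ᵥ x₀ / μ)) • ak := by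
          rw [hcs, expand]
        rw [hc'] at this
        rw [sub_eq_iff_eq_add] at this
        rw [sub_smul]
        refine this.trans ?_
        abel



lemma single_of_deg_one {n : ℕ} (s : Fin n →₀ ℕ) (hs : (s.sum fun _ e => e) ≤ 1)
    (h0 : s ≠ 0) : ∃ j, s = Finsupp.single j 1 := by
  obtain ⟨j, hj⟩ : ∃ j, s j ≠ 0 := by
    by_contra hc; push_neg at hc
    exact h0 (Finsupp.ext fun a => hc a)
  refine ⟨j, ?_⟩
  have hsum : (s.sum fun _ e => e) = ∑ a ∈ s.support, s a := rfl
  have hb : ∑ a ∈ s.support, s a ≤ 1 := hsum ▸ hs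
  have hjs : j ∈ s.support := Finsupp.mem_support_iff.mpr hj
  have hle : s j ≤ ∑ a ∈ s.support, s a :=
    Finset.single_le_sum (fun a _ => Nat.zero_le _) hjs
  have hsj : s j = 1 := by omega
  rw [Finsupp.eq_single_iff]
  refine ⟨?_, hsj⟩
  intro a ha
  simp only [Finset.mem_singleton]
  by_contra hne
  have hsub : ({j, a} : Finset (Fin n)) ⊆ s.support := by
    intro z hz
    simp only [Finset.mem_insert, Finset.mem_singleton] at hz
    rcases hz with rfl | rfl
    · exact hjs
    · exact ha
  have h2 : s j + s a ≤ ∑ z ∈ s.support, s z := by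
    rw [← Finset.sum_pair (Ne.symm hne)]
    exact Finset.sum_le_sum_of_subset hsub
  have ha' : s a ≠ 0 := Finsupp.mem_support_iff.mp ha
  omega

lemma affine_decomp {n : ℕ} (p : MvPolynomial (Fin n) ℝ) (hp : p.totalDegree ≤ 1) :
    p = C (p.coeff 0) + ∑ j, C (p.coeff (Finsupp.single j 1)) * X j := by
  apply MvPolynomial.ext
  intro s
  rw [coeff_add, coeff_C, MvPolynomial.coeff_sum]
  simp only [coeff_C_mul, coeff_X', mul_ite, mul_one, mul_zero]
  by_cases hs0 : s = 0
  · subst hs0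
    simp [Finsupp.single_eq_zero]
  · rw [if_neg (fun h => hs0 h.symm), zero_add]
    by_cases hmem : s ∈ p.support
    · have hdeg : (s.sum fun _ e => e) ≤ 1 :=
        le_trans (MvPolynomial.le_totalDegree hmem) hp
      obtain ⟨j, rfl⟩ := single_of_deg_one s hdeg hs0
      rw [Finset.sum_eq_single j]
      · rw [if_pos rfl]
      · intro b _ hb
        rw [if_neg]
        intro h
        exact hb (Finsupp.single_left_injective one_ne_zero h)
      · intro h; exact absurd (Finset.mem_univ j) h
    · have hc : p.coeff s = 0 := MvPolynomial.notMem_support_iff.mp hmem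
      rw [hc]
      symm
      apply Finset.sum_eq_zero
      intro j _
      split_ifs with h
      · rw [h]; exact hc
      · rfl


lemma eval_affine {n : ℕ} (p : MvPolynomial (Fin n) ℝ) (hp : p.totalDegree ≤ 1)
    (x : Fin n → ℝ) :
    eval x p = p.coeff 0 + ∑ j, p.coeff (Finsupp.single j 1) * x j := by
  conv_lhs => rw [affine_decomp p hp]
  simp

noncomputable def vecOf {n : ℕ} (p : MvPolynomial (Fin n) ℝ) : Fin (n + 1) → ℝ :=
  Fin.cons (p.coeff 0) (fun j => p.coeff (Finsupp.single j 1))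

lemma vecOf_dot {n : ℕ} (p : MvPolynomial (Fin n) ℝ) (μ : Fin (n + 1) → ℝ) :
    vecOf p ⬝ᵥ μ = p.coeff 0 * μ 0 + ∑ j, p.coeff (Finsupp.single j 1) * μ j.succ := by
  simp [vecOf, dotProduct, Fin.sum_univ_succ]

lemma vecOf_dot_cons {n : ℕ} (p : MvPolynomial (Fin n) ℝ) (hp : p.totalDegree ≤ 1)
    (x : Fin n → ℝ) : vecOf p ⬝ᵥ Fin.cons 1 x = eval x p := by
  rw [vecOf_dot, eval_affine p hp]
  simp


/-- Affine form of Farkas' lemma. -/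
theorem farkas_affine {n m : ℕ} (g : Fin m → MvPolynomial (Fin n) ℝ)
    (hg : ∀ i, (g i).totalDegree ≤ 1)
    (hne : {x : Fin n → ℝ | ∀ i, 0 ≤ MvPolynomial.eval x (g i)}.Nonempty)
    (f : MvPolynomial (Fin n) ℝ) (hf : f.totalDegree ≤ 1)
    (hpos : ∀ x ∈ {x : Fin n → ℝ | ∀ i, 0 ≤ MvPolynomial.eval x (g i)},
      0 ≤ MvPolynomial.eval x f) :
    ∃ (l0 : ℝ) (l : Fin m → ℝ), 0 ≤ l0 ∧ (∀ i, 0 ≤ l i) ∧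
      f = MvPolynomial.C l0 + ∑ i, MvPolynomial.C (l i) * g i := by
  classical
  set y : Fin (m + 1) → Fin (n + 1) → ℝ :=
    Fin.cons (Fin.cons 1 0) (fun i => vecOf (g i)) with hy
  have hy0 : ∀ μ : Fin (n + 1) → ℝ, y 0 ⬝ᵥ μ = μ 0 := by
    intro μ
    simp [hy, dotProduct, Fin.sum_univ_succ]
  have hysucc : ∀ i : Fin m, y i.succ = vecOf (g i) := fun i => by
    simp [hy]
  have hyp : ∀ μ : Fin (n + 1) → ℝ, (∀ i, 0 ≤ y i ⬝ᵥ μ) → 0 ≤ vecOf f ⬝ᵥ μ := by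
    intro μ hμ
    have hμ0 : 0 ≤ μ 0 := by have := hμ 0; rwa [hy0] at this
    have hμg : ∀ i : Fin m, 0 ≤ vecOf (g i) ⬝ᵥ μ := by
      intro i; have := hμ i.succ; rwa [hysucc] at this
    rcases eq_or_lt_of_le hμ0 with heq | hgt
    · -- μ 0 = 0 : ray argument
      obtain ⟨x₀, hx₀⟩ := hne
      have hline : ∀ p : MvPolynomial (Fin n) ℝ, p.totalDegree ≤ 1 → ∀ t : ℝ,
          eval (fun j => x₀ j + t * μ j.succ) p = eval x₀ p + t * (vecOf p ⬝ᵥ μ) := by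
        intro p hp t
        rw [eval_affine p hp, eval_affine p hp, vecOf_dot, ← heq, mul_zero, zero_add,
          Finset.mul_sum]
        simp only [mul_add, Finset.sum_add_distrib]
        rw [← add_assoc]
        congr 1
        apply Finset.sum_congr rfl
        intro j _
        ring
      have hKt : ∀ t : ℝ, 0 ≤ t →
          (fun j => x₀ j + t * μ j.succ) ∈ {x : Fin n → ℝ | ∀ i, 0 ≤ eval x (g i)} := by
        intro t ht i
        rw [hline _ (hg i) t]
        exact add_nonneg (hx₀ i) (mul_nonneg ht (hμg i))
      have hft : ∀ t : ℝ, 0 ≤ t → 0 ≤ eval x₀ f + t * (vecOf f ⬝ᵥ μ) := by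
        intro t ht
        rw [← hline f hf t]
        exact hpos _ (hKt t ht)
      by_contra hneg
      push_neg at hneg
      have hfx0 : 0 ≤ eval x₀ f := hpos x₀ hx₀
      set T : ℝ := (eval x₀ f + 1) / (-(vecOf f ⬝ᵥ μ)) with hT
      have hTnn : 0 ≤ T := div_nonneg (by linarith) (by linarith)
      have h1 := hft T hTnn
      have hd : vecOf f ⬝ᵥ μ ≠ 0 := ne_of_lt hneg
      have hTd : T * (-(vecOf f ⬝ᵥ μ)) = eval x₀ f + 1 := by
        rw [hT]
        exact div_mul_cancel₀ _ (neg_ne_zero.mpr hd)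
      rw [mul_neg] at hTd
      linarith
    · -- μ 0 > 0 : scale to a point of K
      set x : Fin n → ℝ := fun j => μ j.succ / μ 0 with hx
      have hscale : ∀ p : MvPolynomial (Fin n) ℝ, p.totalDegree ≤ 1 →
          vecOf p ⬝ᵥ μ = μ 0 * eval x p := by
        intro p hp
        rw [eval_affine p hp, vecOf_dot, mul_add, Finset.mul_sum]
        congr 1
        · ring
        · apply Finset.sum_congr rfl
          intro j _
          rw [hx]
          field_simp
      have hxK : x ∈ {x : Fin n → ℝ | ∀ i, 0 ≤ eval x (g i)} := by
        intro i
        have h := hμg i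
        rw [hscale _ (hg i)] at h
        nlinarith
      rw [hscale f hf]
      exact mul_nonneg (le_of_lt hgt) (hpos x hxK)
  obtain ⟨lam, hlam, hcl⟩ := farkas_lin (m + 1) y (vecOf f) hyp
  refine ⟨lam 0, fun i => lam i.succ, hlam 0, fun i => hlam _, ?_⟩
  apply MvPolynomial.funext
  intro x
  have hsumdot : (∑ i, lam i • y i) ⬝ᵥ Fin.cons 1 x = ∑ i, lam i * (y i ⬝ᵥ Fin.cons 1 x) := by
    simp only [dotProduct, Finset.sum_apply, Pi.smul_apply, smul_eq_mul, Finset.sum_mul,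
      Finset.mul_sum, mul_assoc]
    rw [Finset.sum_comm]
  have h1 : eval x f = ∑ i, lam i * (y i ⬝ᵥ Fin.cons 1 x) := by
    rw [← vecOf_dot_cons f hf x, hcl, hsumdot]
  rw [h1, Fin.sum_univ_succ]
  have h2 : y 0 ⬝ᵥ Fin.cons 1 x = 1 := by rw [hy0, Fin.cons_zero]
  have h3 : ∀ i : Fin m, y i.succ ⬝ᵥ Fin.cons 1 x = eval x (g i) := by
    intro i; rw [hysucc, vecOf_dot_cons _ (hg i)]
  rw [h2]
  simp only [h3, mul_one]
  simp [eval_C]
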